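/- Let Q and Γ be types, let s ≥ 1, and let a deterministic single-tape Turing machine restricted to s tape cells be given by a transition function δ : Q → Γ → Q × Γ × D, where D = {left, stay, right}. A machine configuration is a triple (q, h, T) with q : Q, h : Fin s, T : Fin s → Γ; its successor configuration, defined whenever the head move keeps the head within Fin s, is (q', h', T') where (q', b, m) = δ q (T h), T' = Function.update T h b, and h' = h-1, h, or h+1 according as m = left, stay, or right. Define a cellular automaton with state set R = Option Q × Γ, encoding enc(q,h,T) : Fin s → R by i ↦ ((if i = h then some q else none), T i), and local rule r : Option R → R → Option R → R as follows: if the own state is (some q, a), let (q', b, m) = δ q a and output ((if m = stay then some q' else none), b); if the own state is (none, a), output (o, a) where o = some q' if the left neighbor exists and equals (some q, a_l) with δ q a_l = (q', b, right) for some b, or if the right neighbor exists and equals (some q, a_r) with δ q a_r = (q', b, left) for some b, and o = none otherwise. Then for every machine configuration (q,h,T) whose successor (q',h',T') is defined (the head stays within Fin s), applying one parallel step of the cellular automaton to enc(q,h,T) — i.e., each cell i is replaced by r applied to the encoded states of cells i-1 (or none if i = 0), i, and i+1 (or none if i = s-1) — yields exactly enc(q',h',T'). -/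
import Mathlib


/-- Head directions of a single-tape Turing machine. -/
inductive Dir : Type
  | left : Dir
  | stay : Dir
  | right : Dir

/-- The local rule of the cellular automaton simulating a space-bounded
deterministic single-tape Turing machine with transition function `δ`.
A cell state is a pair of an optional machine state (present iff the head is
on this cell) and a tape symbol; the neighbor arguments are `none` at the two
boundaries. -/
def tmCARule {Q Γ : Type*} (δ : Q → Γ → Q × Γ × Dir) :
    Option (Option Q × Γ) → (Option Q × Γ) → Option (Option Q × Γ) →
      (Option Q × Γ)
  | _, (some q, a), _ =>
      match δ q a with
      | (q', b, Dir.stay) => (some q', b)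
      | (_, b, _) => (none, b)
  | l, (none, a), r =>
      let fromLeft : Option Q :=
        match l with
        | some (some q, al) =>
            match δ q al with
            | (q', _, Dir.right) => some q'
            | _ => none
        | _ => none
      let fromRight : Option Q :=
        match r with
        | some (some q, ar) =>
            match δ q ar with
            | (q', _, Dir.left) => some q'
            | _ => none
        | _ => none
      (fromLeft.orElse fun _ => fromRight, a)

/-- Encoding of a machine configuration `(q, h, T)` as a string of cell
states: cell `i` holds `(some q, T i)` if `i = h` and `(none, T i)` otherwise. -/
def encTM {Q Γ : Type*} {s : ℕ} (q : Q) (h : Fin s) (T : Fin s → Γ) :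
    Fin s → Option Q × Γ :=
  fun i => ((if i = h then some q else none), T i)

/-- One parallel step of the cellular automaton: every cell is simultaneously
replaced by the local rule applied to the states of its left neighbor
(`none` if `i = 0`), itself, and its right neighbor (`none` if `i = s - 1`). -/
def tmCAStep {Q Γ : Type*} {s : ℕ} (δ : Q → Γ → Q × Γ × Dir)
    (e : Fin s → Option Q × Γ) : Fin s → Option Q × Γ :=
  fun i =>
    tmCARule δ
      (if h : 0 < (i : ℕ) then some (e ⟨(i : ℕ) - 1, by omega⟩) else none)
      (e i)
      (if h : (i : ℕ) + 1 < s then some (e ⟨(i : ℕ) + 1, h⟩) else none)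

theorem tmCAStep_encTM {Q Γ : Type*} (s : ℕ) (hs : 1 ≤ s)
    (δ : Q → Γ → Q × Γ × Dir)
    (q : Q) (h : Fin s) (T : Fin s → Γ)
    (q' : Q) (b : Γ) (m : Dir) (hδ : δ q (T h) = (q', b, m))
    (h' : Fin s)
    (hmove : match m with
      | Dir.left => 0 < (h : ℕ) ∧ (h' : ℕ) = (h : ℕ) - 1
      | Dir.stay => h' = h
      | Dir.right => (h : ℕ) + 1 < s ∧ (h' : ℕ) = (h : ℕ) + 1) :
    tmCAStep δ (encTM q h T) = encTM q' h' (Function.update T h b) := by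

  funext i
  simp only [tmCAStep, encTM]
  by_cases hih : i = h
  · subst hih
    simp only [if_pos rfl]
    cases m with
    | stay =>
      have hh : h' = i := hmove
      subst hh
      simp [tmCARule, hδ, Function.update]
    | left =>
      obtain ⟨h1, h2⟩ := hmove
      have hne : i ≠ h' := by
        intro e; rw [e] at h2; omega
      simp [tmCARule, hδ, Function.update, hne]
    | right =>
      obtain ⟨h1, h2⟩ := hmove
      have hne : i ≠ h' := by
        intro e; rw [e] at h2; omega
      simp [tmCARule, hδ, Function.update, hne]
  · simp only [if_neg hih]
    rw [Function.update_of_ne hih]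
    cases m with
    | stay =>
      have hh : h' = h := hmove
      subst hh
      rw [if_neg hih]
      simp only [tmCARule]
      split_ifs with h1 h2 h3 h4 h3 h4 <;>
        simp_all [Fin.ext_iff]
    | left =>
      obtain ⟨hm1, hm2⟩ := hmove
      simp only [tmCARule]
      split_ifs with h1 h2 h3 h4 h3 h4 <;>
        simp_all [Fin.ext_iff] <;> omega
    | right =>
      obtain ⟨hm1, hm2⟩ := hmove
      simp only [tmCARule]
      split_ifs with h1 h2 h3 h4 h3 h4 <;>
        simp_all [Fin.ext_iff] <;> omega
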